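/- For all real numbers t < T, x, k and all λ in (max(e^x − e^k, 0), e^x), if Θ = BS^{−1}(t,T,x,k,λ) satisfies the zero-vanna condition d2(t,T,x,k,Θ) = 0 (equivalently x − k = Θ²(T−t)/2), then (BS^{−1})″(t,T,x,k,λ) = 0. -/

import Mathlib

noncomputable section

/-- Standard normal density. -/
def phi (z : ℝ) : ℝ := (Real.sqrt (2 * Real.pi))⁻¹ * Real.exp (-z ^ 2 / 2)

/-- Standard normal cumulative distribution function. -/
def N (y : ℝ) : ℝ := ∫ z in Set.Iic y, phi z

/-- Black–Scholes auxiliary quantity `d₁`. -/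
def d1 (t T x k σ : ℝ) : ℝ :=
  (x - k) / (σ * Real.sqrt (T - t)) + σ * Real.sqrt (T - t) / 2

/-- Black–Scholes auxiliary quantity `d₂`. -/
def d2 (t T x k σ : ℝ) : ℝ :=
  (x - k) / (σ * Real.sqrt (T - t)) - σ * Real.sqrt (T - t) / 2

/-- Black–Scholes call price with log-spot `x`, log-strike `k`,
time to maturity `T - t` and volatility `σ`. -/
def BS (t T x k σ : ℝ) : ℝ :=
  Real.exp x * N (d1 t T x k σ) - Real.exp k * N (d2 t T x k σ)

/-- Inverse of the Black–Scholes price in the volatility argument on `(0, ∞)`. -/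
def BSinv (t T x k l : ℝ) : ℝ := Function.invFunOn (BS t T x k) (Set.Ioi 0) l

section BSinvAux

open Real MeasureTheory Set Filter Topology

lemma sqrt2pi_pos : 0 < Real.sqrt (2 * Real.pi) := Real.sqrt_pos.mpr (by positivity)

lemma phi_pos (z : ℝ) : 0 < phi z := by unfold phi; positivity

lemma phi_le (z : ℝ) : phi z ≤ (Real.sqrt (2 * Real.pi))⁻¹ := by
  unfold phi
  have h1 : Real.exp (-z ^ 2 / 2) ≤ 1 := by
    rw [Real.exp_le_one_iff]; nlinarith [sq_nonneg z]
  exact mul_le_of_le_one_right (le_of_lt (inv_pos.mpr sqrt2pi_pos)) h1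

lemma phi_eq (z : ℝ) : phi z = (Real.sqrt (2 * Real.pi))⁻¹ * Real.exp (-(1/2) * z ^ 2) := by
  unfold phi; ring_nf

lemma phi_neg (z : ℝ) : phi (-z) = phi z := by unfold phi; ring_nf

lemma continuous_phi : Continuous phi := by
  unfold phi; fun_prop

lemma integrable_phi : Integrable phi := by
  have := (integrable_exp_neg_mul_sq (by norm_num : (0:ℝ) < 1/2)).const_mul
    (Real.sqrt (2 * Real.pi))⁻¹
  refine this.congr (Eventually.of_forall fun z => ?_)
  rw [phi_eq]

lemma integral_phi : ∫ z, phi z = 1 := by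
  have h : ∫ z, phi z = (Real.sqrt (2 * Real.pi))⁻¹ * ∫ z : ℝ, Real.exp (-(1/2) * z ^ 2) := by
    rw [← integral_const_mul]
    congr 1; funext z; rw [phi_eq]
  rw [h, integral_gaussian]
  have : Real.pi / (1/2) = 2 * Real.pi := by ring
  rw [this, inv_mul_cancel₀ (ne_of_gt sqrt2pi_pos)]

lemma hasDerivAt_phi (z : ℝ) : HasDerivAt phi (-z * phi z) z := by
  have hg : HasDerivAt (fun w : ℝ => -w ^ 2 / 2) (-z) z := by
    have := ((hasDerivAt_pow 2 z).neg).div_const 2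
    refine this.congr_deriv ?_
    simp; ring
  have := (hg.exp).const_mul (Real.sqrt (2 * Real.pi))⁻¹
  refine this.congr_deriv ?_
  unfold phi; ring

lemma hasStrictDerivAt_N (y : ℝ) : HasStrictDerivAt N (phi y) y := by
  have h : N = fun u => N 0 + ∫ z in (0:ℝ)..u, phi z := by
    funext u
    rw [← intervalIntegral.integral_Iic_sub_Iic integrable_phi.integrableOn
      integrable_phi.integrableOn]
    unfold N; ring
  rw [h]
  exact (continuous_phi.integral_hasStrictDerivAt 0 y).const_add (N 0)

lemma N_nonneg (y : ℝ) : 0 ≤ N y :=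
  setIntegral_nonneg measurableSet_Iic fun z _ => (phi_pos z).le

lemma N_le_one (y : ℝ) : N y ≤ 1 := by
  rw [← integral_phi]
  exact setIntegral_le_integral integrable_phi (Eventually.of_forall fun z => (phi_pos z).le)

lemma N_mono : Monotone N := fun y1 y2 h =>
  setIntegral_mono_set integrable_phi.integrableOn
    (Eventually.of_forall fun z => (phi_pos z).le)
    (HasSubset.Subset.eventuallyLE (Iic_subset_Iic.mpr h))

lemma one_sub_N (y : ℝ) : 1 - N y = ∫ z in Set.Ioi y, phi z := by
  have := integral_add_compl (measurableSet_Iic (a := y)) integrable_phi (f := phi)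
  rw [Set.compl_Iic] at this
  rw [← integral_phi, ← this]; unfold N; ring

lemma N_sub_N_le {y1 y2 : ℝ} (h : y1 ≤ y2) :
    N y2 - N y1 ≤ (Real.sqrt (2 * Real.pi))⁻¹ * (y2 - y1) := by
  have h1 : N y2 - N y1 = ∫ z in Set.Ioc y1 y2, phi z := by
    unfold N
    rw [intervalIntegral.integral_Iic_sub_Iic integrable_phi.integrableOn
      integrable_phi.integrableOn, intervalIntegral.integral_of_le h]
  rw [h1]
  have h2 : ∫ z in Set.Ioc y1 y2, phi z ≤ ∫ _ in Set.Ioc y1 y2,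
      (Real.sqrt (2 * Real.pi))⁻¹ := by
    refine setIntegral_mono_on integrable_phi.integrableOn
      (integrableOn_const ?_) measurableSet_Ioc fun z _ => phi_le z
    rw [Real.volume_Ioc]; exact ENNReal.ofReal_ne_top
  refine h2.trans ?_
  rw [setIntegral_const, Real.volume_real_Ioc_of_le h, smul_eq_mul]
  ring_nf
  exact le_rfl

lemma integrable_mul_phi : Integrable (fun z => z * phi z) := by
  have := (integrable_mul_exp_neg_mul_sq (by norm_num : (0:ℝ) < 1/2)).const_mul
    (Real.sqrt (2 * Real.pi))⁻¹
  refine this.congr (Eventually.of_forall fun z => ?_)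
  simp only [phi]; ring_nf

lemma phi_tendsto_atTop : Tendsto phi atTop (𝓝 0) := by
  have h1 : Tendsto (fun z : ℝ => -z ^ 2 / 2) atTop atBot := by
    apply Tendsto.atBot_div_const (by norm_num : (0:ℝ) < 2)
    exact tendsto_neg_atBot_iff.mpr (tendsto_pow_atTop (by norm_num))
  have h2 : Tendsto (fun z : ℝ => Real.exp (-z ^ 2 / 2)) atTop (𝓝 0) :=
    Real.tendsto_exp_atBot.comp h1
  have h3 := h2.const_mul (Real.sqrt (2 * Real.pi))⁻¹
  rw [mul_zero] at h3
  exact h3.congr fun z => rfl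

lemma tail_Ioi_le {y : ℝ} (hy : 1 ≤ y) : ∫ z in Set.Ioi y, phi z ≤ phi y := by
  have hstep : ∫ z in Set.Ioi y, phi z ≤ ∫ z in Set.Ioi y, z * phi z := by
    refine setIntegral_mono_on integrable_phi.integrableOn
      integrable_mul_phi.integrableOn measurableSet_Ioi fun z hz => ?_
    have h1 : (1:ℝ) ≤ z := hy.trans (le_of_lt hz)
    nlinarith [phi_pos z]
  refine hstep.trans (le_of_eq ?_)
  have := integral_Ioi_of_hasDerivAt_of_tendsto
    (f := fun z => -phi z) (f' := fun z => z * phi z) (a := y) (m := 0)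
    (continuous_phi.neg.continuousWithinAt)
    (fun z _ => by have h := (hasDerivAt_phi z).neg; simp only [neg_mul, neg_neg] at h; exact h)
    integrable_mul_phi.integrableOn
    (by simpa using phi_tendsto_atTop.neg)
  rw [this]; ring
  
lemma tail_Iic_le {y : ℝ} (hy : y ≤ -1) : N y ≤ phi y := by
  have h1 : N y = ∫ z in Set.Ioi (-y), phi z := by
    rw [← integral_comp_neg_Iic y phi]
    unfold N
    congr 1; funext z; rw [phi_neg]
  rw [h1, ← phi_neg y]
  exact tail_Ioi_le (by linarith)

lemma hasStrictDerivAt_d1 (t T x k σ : ℝ) (hσ : σ ≠ 0) :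
    HasStrictDerivAt (fun u => d1 t T x k u)
      ((x - k) / Real.sqrt (T - t) * (-(σ ^ 2)⁻¹) + Real.sqrt (T - t) / 2) σ := by
  have hrw : (fun u => d1 t T x k u)
      = fun u => (x - k) / Real.sqrt (T - t) * u⁻¹ + u * (Real.sqrt (T - t) / 2) := by
    funext u
    unfold d1
    rw [mul_comm u (Real.sqrt (T - t)), ← div_div,
      div_eq_mul_inv ((x - k) / Real.sqrt (T - t))]
    ring
  rw [hrw]
  have h1 := (hasStrictDerivAt_inv hσ).const_mul ((x - k) / Real.sqrt (T - t))
  have h2 := (hasStrictDerivAt_id σ).mul_const (Real.sqrt (T - t) / 2)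
  exact (h1.add h2).congr_deriv (by ring)

lemma hasStrictDerivAt_d2 (t T x k σ : ℝ) (hσ : σ ≠ 0) :
    HasStrictDerivAt (fun u => d2 t T x k u)
      ((x - k) / Real.sqrt (T - t) * (-(σ ^ 2)⁻¹) - Real.sqrt (T - t) / 2) σ := by
  have hrw : (fun u => d2 t T x k u)
      = fun u => d1 t T x k u - u * Real.sqrt (T - t) := by
    funext u; unfold d1 d2; ring
  rw [hrw]
  have h := (hasStrictDerivAt_d1 t T x k σ hσ).sub
    ((hasStrictDerivAt_id σ).mul_const (Real.sqrt (T - t)))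
  refine h.congr_deriv ?_
  ring

lemma exp_phi_identity (t T x k : ℝ) (htT : t < T) {σ : ℝ} (hσ : 0 < σ) :
    Real.exp k * phi (d2 t T x k σ) = Real.exp x * phi (d1 t T x k σ) := by
  have hs : 0 < Real.sqrt (T - t) := Real.sqrt_pos.mpr (by linarith)
  have key : k + -(d2 t T x k σ) ^ 2 / 2 = x + -(d1 t T x k σ) ^ 2 / 2 := by
    unfold d1 d2
    have hss : σ * Real.sqrt (T - t) ≠ 0 := by positivity
    field_simp
    ring
  have h2 : Real.exp k * Real.exp (-(d2 t T x k σ) ^ 2 / 2)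
      = Real.exp x * Real.exp (-(d1 t T x k σ) ^ 2 / 2) := by
    rw [← Real.exp_add, ← Real.exp_add, key]
  unfold phi
  rw [mul_left_comm, h2, mul_left_comm]

lemma hasStrictDerivAt_BS (t T x k : ℝ) (htT : t < T) {σ : ℝ} (hσ : 0 < σ) :
    HasStrictDerivAt (fun u => BS t T x k u)
      (Real.exp x * phi (d1 t T x k σ) * Real.sqrt (T - t)) σ := by
  have h1 := (hasStrictDerivAt_N (d1 t T x k σ)).comp σ
    (hasStrictDerivAt_d1 t T x k σ hσ.ne')
  have h2 := (hasStrictDerivAt_N (d2 t T x k σ)).comp σ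
    (hasStrictDerivAt_d2 t T x k σ hσ.ne')
  have h3 := (h1.const_mul (Real.exp x)).sub (h2.const_mul (Real.exp k))
  have hfun : (fun u => BS t T x k u)
      = fun u => Real.exp x * (N ∘ fun u => d1 t T x k u) u
        - Real.exp k * (N ∘ fun u => d2 t T x k u) u := rfl
  rw [hfun]
  refine h3.congr_deriv (Eq.symm ?_)
  have hid := exp_phi_identity t T x k htT hσ
  linear_combination
    ((x - k) / Real.sqrt (T - t) * (-(σ ^ 2)⁻¹) - Real.sqrt (T - t) / 2) * hid

lemma BS_strictMonoOn (t T x k : ℝ) (htT : t < T) :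
    StrictMonoOn (fun σ => BS t T x k σ) (Set.Ioi 0) := by
  apply strictMonoOn_of_deriv_pos (convex_Ioi 0)
  · exact fun σ hσ =>
      ((hasStrictDerivAt_BS t T x k htT hσ).hasDerivAt.continuousAt).continuousWithinAt
  · rw [interior_Ioi]
    intro σ hσ
    rw [(hasStrictDerivAt_BS t T x k htT hσ).hasDerivAt.deriv]
    have h1 := phi_pos (d1 t T x k σ)
    have hs : 0 < Real.sqrt (T - t) := Real.sqrt_pos.mpr (by linarith)
    positivity

lemma hasDerivAt_V (t T x k θ : ℝ) (htT : t < T) (hθ : 0 < θ)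
    (hzv : d2 t T x k θ = 0) :
    HasDerivAt (fun σ => Real.exp x * phi (d1 t T x k σ) * Real.sqrt (T - t)) 0 θ := by
  have hs : 0 < Real.sqrt (T - t) := Real.sqrt_pos.mpr (by linarith)
  have hd1 := (hasStrictDerivAt_d1 t T x k θ hθ.ne').hasDerivAt
  have hD0 : (x - k) / Real.sqrt (T - t) * (-(θ ^ 2)⁻¹) + Real.sqrt (T - t) / 2 = 0 := by
    unfold d2 at hzv
    field_simp at hzv ⊢
    nlinarith [hzv]
  have hphi := (hasDerivAt_phi (d1 t T x k θ)).comp θ hd1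
  have h := (hphi.const_mul (Real.exp x)).mul_const (Real.sqrt (T - t))
  refine h.congr_deriv ?_
  rw [hD0]
  ring

lemma d1_sub_d2 (t T x k σ : ℝ) :
    d1 t T x k σ - d2 t T x k σ = σ * Real.sqrt (T - t) := by
  unfold d1 d2; ring



lemma BS_lower_bound (t T x k : ℝ) (htT : t < T) {σ : ℝ} (hσ : 0 < σ) :
    BS t T x k σ ≤ max (Real.exp x - Real.exp k) 0
      + Real.exp x * ((Real.sqrt (2 * Real.pi))⁻¹ * (σ * Real.sqrt (T - t))) := by
  have hs : 0 < Real.sqrt (T - t) := Real.sqrt_pos.mpr (by linarith)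
  have hle : d2 t T x k σ ≤ d1 t T x k σ := by
    have := d1_sub_d2 t T x k σ; nlinarith
  have h1 := N_sub_N_le hle
  rw [d1_sub_d2] at h1
  have h2 : (Real.exp x - Real.exp k) * N (d2 t T x k σ)
      ≤ max (Real.exp x - Real.exp k) 0 := by
    rcases le_total (Real.exp k) (Real.exp x) with h | h
    · refine le_trans ?_ (le_max_left _ _)
      nlinarith [N_le_one (d2 t T x k σ), N_nonneg (d2 t T x k σ)]
    · refine le_trans ?_ (le_max_right _ _)
      nlinarith [N_nonneg (d2 t T x k σ)]
  have h3 : Real.exp x * (N (d1 t T x k σ) - N (d2 t T x k σ))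
      ≤ Real.exp x * ((Real.sqrt (2 * Real.pi))⁻¹ * (σ * Real.sqrt (T - t))) :=
    mul_le_mul_of_nonneg_left h1 (Real.exp_pos x).le
  have hBS : BS t T x k σ = Real.exp x * (N (d1 t T x k σ) - N (d2 t T x k σ))
      + (Real.exp x - Real.exp k) * N (d2 t T x k σ) := by unfold BS; ring
  rw [hBS]; linarith

lemma BS_upper_bound (t T x k Y : ℝ) (htT : t < T) {σ : ℝ} (hY : 1 ≤ Y)
    (h1 : Y ≤ d1 t T x k σ) (h2 : d2 t T x k σ ≤ -Y) :
    Real.exp x - BS t T x k σ ≤ (Real.exp x + Real.exp k) * phi Y := by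
  have ha : 1 - N (d1 t T x k σ) ≤ phi Y := by
    rw [one_sub_N]
    refine le_trans (setIntegral_mono_set integrable_phi.integrableOn
      (Eventually.of_forall fun z => (phi_pos z).le)
      (HasSubset.Subset.eventuallyLE (Set.Ioi_subset_Ioi h1))) (tail_Ioi_le hY)
  have hb : N (d2 t T x k σ) ≤ phi Y := by
    refine le_trans (N_mono h2) ?_
    rw [← phi_neg Y]
    exact tail_Iic_le (by linarith)
  have hBS : Real.exp x - BS t T x k σ
      = Real.exp x * (1 - N (d1 t T x k σ)) + Real.exp k * N (d2 t T x k σ) := by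
    unfold BS; ring
  rw [hBS]
  nlinarith [Real.exp_pos x, Real.exp_pos k,
    N_le_one (d1 t T x k σ), N_nonneg (d2 t T x k σ)]

lemma exists_BS_eq (t T x k p : ℝ) (htT : t < T)
    (hp : p ∈ Set.Ioo (max (Real.exp x - Real.exp k) 0) (Real.exp x)) :
    ∃ σ ∈ Set.Ioi (0:ℝ), BS t T x k σ = p := by
  obtain ⟨hpM, hpE⟩ := hp
  have hs : 0 < Real.sqrt (T - t) := Real.sqrt_pos.mpr (by linarith)
  have hc : 0 < (Real.sqrt (2 * Real.pi))⁻¹ := inv_pos.mpr sqrt2pi_pos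
  -- lower witness
  have hapos : 0 < (p - max (Real.exp x - Real.exp k) 0)
      / (2 * (Real.exp x * (Real.sqrt (2 * Real.pi))⁻¹ * Real.sqrt (T - t))) := by
    apply div_pos (by linarith) (by positivity)
  set a := (p - max (Real.exp x - Real.exp k) 0)
      / (2 * (Real.exp x * (Real.sqrt (2 * Real.pi))⁻¹ * Real.sqrt (T - t))) with hadef
  have hlow : BS t T x k a < p := by
    have hbd := BS_lower_bound t T x k htT hapos
    have heq : Real.exp x * ((Real.sqrt (2 * Real.pi))⁻¹ * (a * Real.sqrt (T - t)))
        = (p - max (Real.exp x - Real.exp k) 0) / 2 := by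
      rw [hadef]
      have h1 : Real.exp x ≠ 0 := (Real.exp_pos x).ne'
      have h2 : Real.sqrt (2 * Real.pi) ≠ 0 := sqrt2pi_pos.ne'
      have h3 : Real.sqrt (T - t) ≠ 0 := hs.ne'
      field_simp
    rw [heq] at hbd
    linarith
  -- upper witness
  obtain ⟨Y, hY1, hYlt⟩ : ∃ Y, 1 ≤ Y ∧
      (Real.exp x + Real.exp k) * phi Y < Real.exp x - p := by
    have h0 : Tendsto (fun Y => (Real.exp x + Real.exp k) * phi Y) atTop (𝓝 0) := by
      have := phi_tendsto_atTop.const_mul (Real.exp x + Real.exp k)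
      rwa [mul_zero] at this
    have h1 := h0.eventually_lt_const (by linarith : (0:ℝ) < Real.exp x - p)
    obtain ⟨Y, hY⟩ := ((eventually_ge_atTop (1:ℝ)).and h1).exists
    exact ⟨Y, hY.1, hY.2⟩
  set s := Real.sqrt (T - t) with hsdef
  set b0 := max 1 ((Y + |x - k| / s) * 2 / s) with hb0def
  have hb01 : (1:ℝ) ≤ b0 := le_max_left _ _
  have hb0pos : (0:ℝ) < b0 := lt_of_lt_of_le one_pos hb01
  have hb0s : (Y + |x - k| / s) * 2 ≤ b0 * s := by
    have h := le_max_right 1 ((Y + |x - k| / s) * 2 / s)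
    calc (Y + |x - k| / s) * 2 = (Y + |x - k| / s) * 2 / s * s := by field_simp
    _ ≤ b0 * s := mul_le_mul_of_nonneg_right h hs.le
  have habs : |x - k| / (b0 * s) ≤ |x - k| / s := by
    rw [div_le_div_iff₀ (by positivity) hs]
    nlinarith [mul_nonneg (abs_nonneg (x - k)) (mul_nonneg hs.le (sub_nonneg.mpr hb01))]
  have he1 : -(|x - k| / (b0 * s)) ≤ (x - k) / (b0 * s) := by
    rw [← neg_div]
    gcongr
    exact neg_abs_le _
  have he3 : (x - k) / (b0 * s) ≤ |x - k| / (b0 * s) := by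
    gcongr
    exact le_abs_self _
  have hbound2 : Y + |x - k| / s ≤ b0 * s / 2 := by linarith
  have hd1b : Y ≤ d1 t T x k b0 := by
    unfold d1
    rw [← hsdef]
    have : -(|x - k| / s) ≤ (x - k) / (b0 * s) := by linarith
    linarith
  have hd2b : d2 t T x k b0 ≤ -Y := by
    unfold d2
    rw [← hsdef]
    have : (x - k) / (b0 * s) ≤ |x - k| / s := by linarith
    linarith
  have hhigh : p < BS t T x k b0 := by
    have := BS_upper_bound t T x k Y htT hY1 hd1b hd2b
    linarith
  -- IVT
  set b := max b0 a with hbdef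
  have hab : a ≤ b := le_max_right _ _
  have hbpos : 0 < b := lt_of_lt_of_le hb0pos (le_max_left _ _)
  have hgb : p < BS t T x k b := by
    rcases eq_or_lt_of_le (le_max_left b0 a : b0 ≤ b) with h | h
    · rw [hbdef, ← h]; exact hhigh
    · have h2 : BS t T x k b0 < BS t T x k b :=
        (BS_strictMonoOn t T x k htT) (Set.mem_Ioi.mpr hb0pos) (Set.mem_Ioi.mpr hbpos) h
      linarith
  have hcont : ContinuousOn (fun σ => BS t T x k σ) (Set.Icc a b) := fun σ hσ =>
    ((hasStrictDerivAt_BS t T x k htT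
      (lt_of_lt_of_le hapos hσ.1)).hasDerivAt.continuousAt).continuousWithinAt
  have hIVT := intermediate_value_Icc hab hcont
  obtain ⟨σ, hσmem, hσeq⟩ := hIVT ⟨hlow.le, hgb.le⟩
  exact ⟨σ, Set.mem_Ioi.mpr (lt_of_lt_of_le hapos hσmem.1), hσeq⟩

end BSinvAux

open Real MeasureTheory Set Filter Topology in
theorem bsinv_second_derivative_zero_vanna (t T x k l : ℝ) (htT : t < T)
    (hl : l ∈ Set.Ioo (max (Real.exp x - Real.exp k) 0) (Real.exp x))
    (hzv : d2 t T x k (BSinv t T x k l) = 0) :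
    iteratedDeriv 2 (fun p => BSinv t T x k p) l = 0 := by
  have hs : 0 < Real.sqrt (T - t) := Real.sqrt_pos.mpr (by linarith)
  have hinj : Set.InjOn (fun σ => BS t T x k σ) (Set.Ioi 0) :=
    (BS_strictMonoOn t T x k htT).injOn
  have key : ∀ p ∈ Set.Ioo (max (Real.exp x - Real.exp k) 0) (Real.exp x),
      BSinv t T x k p ∈ Set.Ioi (0:ℝ) ∧
      HasDerivAt (fun q => BSinv t T x k q)
        (Real.exp x * phi (d1 t T x k (BSinv t T x k p)) * Real.sqrt (T - t))⁻¹ p := by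
    intro p hp
    obtain ⟨σ, hσ, hgp⟩ := exists_BS_eq t T x k p htT hp
    have hex : ∃ a ∈ Set.Ioi (0:ℝ), BS t T x k a = p := ⟨σ, hσ, hgp⟩
    have hmem : BSinv t T x k p ∈ Set.Ioi (0:ℝ) := Function.invFunOn_mem hex
    have heq : BS t T x k (BSinv t T x k p) = p := Function.invFunOn_eq hex
    refine ⟨hmem, ?_⟩
    have hg := hasStrictDerivAt_BS t T x k htT hmem
    have hlinv : ∀ᶠ u in 𝓝 (BSinv t T x k p),
        BSinv t T x k (BS t T x k u) = u := by
      filter_upwards [isOpen_Ioi.mem_nhds hmem] with u hu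
      have hex2 : ∃ a ∈ Set.Ioi (0:ℝ), BS t T x k a = BS t T x k u := ⟨u, hu, rfl⟩
      exact hinj (Function.invFunOn_mem hex2) hu (Function.invFunOn_eq hex2)
    have hVpos : 0 < Real.exp x * phi (d1 t T x k (BSinv t T x k p)) * Real.sqrt (T - t) := by
      have := phi_pos (d1 t T x k (BSinv t T x k p)); positivity
    have hfin := hg.to_local_left_inverse hVpos.ne' (g := fun q => BSinv t T x k q) hlinv
    simp only [heq] at hfin
    exact hfin.hasDerivAt
  obtain ⟨hθmem, hθD⟩ := key l hl
  have hθpos : (0:ℝ) < BSinv t T x k l := hθmem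
  have hev : deriv (fun p => BSinv t T x k p) =ᶠ[𝓝 l]
      fun p => (Real.exp x * phi (d1 t T x k (BSinv t T x k p)) * Real.sqrt (T - t))⁻¹ := by
    filter_upwards [isOpen_Ioo.mem_nhds hl] with p hp
    exact ((key p hp).2).deriv
  have hV : HasDerivAt (fun σ => Real.exp x * phi (d1 t T x k σ) * Real.sqrt (T - t))
      0 (BSinv t T x k l) := hasDerivAt_V t T x k _ htT hθpos hzv
  have hcomp : HasDerivAt
      (fun p => Real.exp x * phi (d1 t T x k (BSinv t T x k p)) * Real.sqrt (T - t))
      (0 * (Real.exp x * phi (d1 t T x k (BSinv t T x k l)) * Real.sqrt (T - t))⁻¹) l :=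
    hV.comp l hθD
  have hVpos : 0 < Real.exp x * phi (d1 t T x k (BSinv t T x k l)) * Real.sqrt (T - t) := by
    have := phi_pos (d1 t T x k (BSinv t T x k l)); positivity
  have hinvD := hcomp.inv hVpos.ne'
  rw [show (2:ℕ) = 1 + 1 from rfl, iteratedDeriv_succ, iteratedDeriv_one]
  rw [Filter.EventuallyEq.deriv_eq hev]
  rw [show deriv (fun p => (Real.exp x * phi (d1 t T x k (BSinv t T x k p)) * Real.sqrt (T - t))⁻¹) l = _ from hinvD.deriv]
  simp
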